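/- Let p ≥ 2 and M ≥ 2, and let (X_i, Y_i), i = 1,…,M, be pairs of 𝓗-valued random variables on a common probability space such that each pair (X_i, Y_i) is identically distributed with a fixed pair (X, Y) where X, Y ∈ L^{2p}(Ω;𝓗) (no independence across i is assumed). Then ‖cov_M[X_·] − cov_M[Y_·]‖_{L^p(Ω;𝓗⊗𝓗)} ≤ (2M/(M−1)) · ‖X − Y‖_{L^{2p}(Ω;𝓗)} · (‖X‖_{L^{2p}(Ω;𝓗)} + ‖Y‖_{L^{2p}(Ω;𝓗)}). -/

import Mathlib

open MeasureTheory ProbabilityTheory ContinuousLinearMap Finset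
open scoped RealInnerProductSpace ENNReal

/-- The `L^p(Ω;𝓗)`-norm of a random variable, for a real exponent `p`. -/
noncomputable def lpNorm {Ω : Type*} [MeasurableSpace Ω] (μ : Measure Ω)
    {H : Type*} [NormedAddCommGroup H] (p : ℝ) (u : Ω → H) : ℝ :=
  (∫ ω, ‖u ω‖ ^ p ∂μ) ^ (1 / p)

/-- Hilbert–Schmidt norm of an operator on `𝓗`, computed in the orthonormal basis `e`. -/
noncomputable def hsNorm {H : Type*} [NormedAddCommGroup H] [InnerProductSpace ℝ H]
    (e : HilbertBasis ℕ ℝ H) (T : H →L[ℝ] H) : ℝ :=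
  Real.sqrt (∑' k, ‖T (e k)‖ ^ 2)

/-- The `L^p(Ω; 𝓗⊗𝓗)`-norm of an operator-valued random variable. -/
noncomputable def lpNormHS {Ω : Type*} [MeasurableSpace Ω] (μ : Measure Ω)
    {H : Type*} [NormedAddCommGroup H] [InnerProductSpace ℝ H]
    (e : HilbertBasis ℕ ℝ H) (p : ℝ) (T : Ω → H →L[ℝ] H) : ℝ :=
  (∫ ω, hsNorm e (T ω) ^ p ∂μ) ^ (1 / p)

/-- The rank-one operator `x ⊗ x`. -/
noncomputable def outer {E : Type*} [NormedAddCommGroup E] [InnerProductSpace ℝ E]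
    (x : E) : E →L[ℝ] E :=
  (innerSL ℝ x).smulRight x

/-- The sample covariance `cov_M[u] = (M/(M−1)) (E_M[u⊗u] − E_M[u] ⊗ E_M[u])`
of the samples `u_1(ω), …, u_M(ω)`. -/
noncomputable def sampleCov {Ω : Type*} {H : Type*} [NormedAddCommGroup H]
    [InnerProductSpace ℝ H] (M : ℕ) (u : Fin M → Ω → H) (ω : Ω) : H →L[ℝ] H :=
  ((M : ℝ) / ((M : ℝ) - 1)) •
    ((M : ℝ)⁻¹ • (∑ i, outer (u i ω)) - outer ((M : ℝ)⁻¹ • ∑ i, u i ω))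

section HS
variable {H : Type*} [NormedAddCommGroup H] [InnerProductSpace ℝ H]
  (e : HilbertBasis ℕ ℝ H)

noncomputable def rankOne (a b : H) : H →L[ℝ] H := (innerSL ℝ a).smulRight b

lemma rankOne_apply (a b v : H) : rankOne a b v = ⟪a, v⟫ • b := rfl

lemma outer_eq (x : H) : outer x = rankOne x x := rfl

def IsHS (T : H →L[ℝ] H) : Prop := Memℓp (fun k => T (e k)) 2

lemma hasSum_rankOne (a b : H) :
    HasSum (fun k => ‖rankOne a b (e k)‖ ^ 2) (‖a‖ ^ 2 * ‖b‖ ^ 2) := by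
  have h := (e.hasSum_inner_mul_inner a a).mul_right (‖b‖ ^ 2)
  rw [real_inner_self_eq_norm_sq] at h
  convert h using 2 with k
  · exact rfl
  rw [rankOne_apply, norm_smul, mul_pow, Real.norm_eq_abs, sq_abs,
    real_inner_comm (e k) a]
  ring

lemma isHS_rankOne (a b : H) : IsHS e (rankOne a b) := by
  apply memℓp_gen
  have : (2 : ℝ≥0∞).toReal = 2 := by simp
  rw [this]
  have := (hasSum_rankOne e a b).summable
  convert this using 2 with k
  rw [← Real.rpow_natCast]
  norm_num

lemma hsNorm_eq {T : H →L[ℝ] H} (hT : IsHS e T) :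
    hsNorm e T = ‖(⟨fun k => T (e k), hT⟩ : lp (fun _ : ℕ => H) 2)‖ := by
  rw [lp.norm_eq_tsum_rpow (by norm_num) _, hsNorm]
  rw [Real.sqrt_eq_rpow]
  have h2 : (2 : ℝ≥0∞).toReal = 2 := by simp
  rw [h2]
  congr 1
  apply tsum_congr; intro k
  rw [← Real.rpow_natCast]
  norm_num

lemma hsNorm_nonneg (T : H →L[ℝ] H) : 0 ≤ hsNorm e T := Real.sqrt_nonneg _

lemma hsNorm_rankOne (a b : H) : hsNorm e (rankOne a b) = ‖a‖ * ‖b‖ := by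
  rw [hsNorm, (hasSum_rankOne e a b).tsum_eq, ← mul_pow,
    Real.sqrt_sq (by positivity)]

lemma IsHS.add {S T : H →L[ℝ] H} (hS : IsHS e S) (hT : IsHS e T) : IsHS e (S + T) :=
  Memℓp.add hS hT

lemma IsHS.smul {T : H →L[ℝ] H} (hT : IsHS e T) (c : ℝ) : IsHS e (c • T) :=
  Memℓp.const_smul hT c

lemma IsHS.neg {T : H →L[ℝ] H} (hT : IsHS e T) : IsHS e (-T) := Memℓp.neg hT

lemma IsHS.sub {S T : H →L[ℝ] H} (hS : IsHS e S) (hT : IsHS e T) : IsHS e (S - T) := by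
  rw [sub_eq_add_neg]; exact hS.add e hT.neg

lemma hsNorm_add_le {S T : H →L[ℝ] H} (hS : IsHS e S) (hT : IsHS e T) :
    hsNorm e (S + T) ≤ hsNorm e S + hsNorm e T := by
  rw [hsNorm_eq e hS, hsNorm_eq e hT, hsNorm_eq e (hS.add e hT)]
  exact norm_add_le (⟨fun k => S (e k), hS⟩ : lp (fun _ : ℕ => H) 2) ⟨fun k => T (e k), hT⟩

lemma hsNorm_smul (c : ℝ) (T : H →L[ℝ] H) : hsNorm e (c • T) = |c| * hsNorm e T := by
  rw [hsNorm, hsNorm]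
  have : ∀ k, ‖(c • T) (e k)‖ ^ 2 = c ^ 2 * ‖T (e k)‖ ^ 2 := by
    intro k
    rw [ContinuousLinearMap.smul_apply, norm_smul, mul_pow, Real.norm_eq_abs, sq_abs]
  simp_rw [this, tsum_mul_left]
  rw [Real.sqrt_mul (sq_nonneg c), Real.sqrt_sq_eq_abs]

lemma hsNorm_neg (T : H →L[ℝ] H) : hsNorm e (-T) = hsNorm e T := by
  rw [hsNorm, hsNorm]; simp

lemma hsNorm_sub_le {S T : H →L[ℝ] H} (hS : IsHS e S) (hT : IsHS e T) :
    hsNorm e (S - T) ≤ hsNorm e S + hsNorm e T := by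
  rw [sub_eq_add_neg]
  refine (hsNorm_add_le e hS hT.neg).trans_eq ?_
  rw [hsNorm_neg]

lemma isHS_sum {ι : Type*} (s : Finset ι) (T : ι → H →L[ℝ] H)
    (hT : ∀ i ∈ s, IsHS e (T i)) : IsHS e (∑ i ∈ s, T i) := by
  classical
  induction s using Finset.induction_on with
  | empty => simp [IsHS]; exact zero_memℓp
  | insert a s hnotmem ih =>
      rw [Finset.sum_insert hnotmem]
      exact (hT _ (Finset.mem_insert_self _ _)).add e
        (ih fun i hi => hT i (Finset.mem_insert_of_mem hi))

lemma hsNorm_sum_le {ι : Type*} (s : Finset ι) (T : ι → H →L[ℝ] H)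
    (hT : ∀ i ∈ s, IsHS e (T i)) :
    hsNorm e (∑ i ∈ s, T i) ≤ ∑ i ∈ s, hsNorm e (T i) := by
  classical
  induction s using Finset.induction_on with
  | empty => simp [hsNorm]
  | insert a s hnotmem ih =>
      rw [Finset.sum_insert hnotmem, Finset.sum_insert hnotmem]
      refine (hsNorm_add_le e (hT _ (Finset.mem_insert_self _ _))
        (isHS_sum e _ _ fun i hi => hT i (Finset.mem_insert_of_mem hi))).trans ?_
      gcongr
      exact ih fun i hi => hT i (Finset.mem_insert_of_mem hi)

lemma outer_sub (x y : H) :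
    outer x - outer y = rankOne x (x - y) + rankOne (x - y) y := by
  ext v
  simp only [ContinuousLinearMap.sub_apply, ContinuousLinearMap.add_apply, outer_eq,
    rankOne_apply, inner_sub_left, smul_sub, sub_smul]
  abel

lemma isHS_outer_sub (x y : H) : IsHS e (outer x - outer y) := by
  rw [outer_sub]
  exact (isHS_rankOne e _ _).add e (isHS_rankOne e _ _)

lemma hsNorm_outer_sub_le (x y : H) :
    hsNorm e (outer x - outer y) ≤ ‖x - y‖ * (‖x‖ + ‖y‖) := by
  rw [outer_sub]
  refine (hsNorm_add_le e (isHS_rankOne e _ _) (isHS_rankOne e _ _)).trans ?_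
  rw [hsNorm_rankOne, hsNorm_rankOne]
  ring_nf
  nlinarith [norm_nonneg x, norm_nonneg y, norm_nonneg (x - y)]

end HS


lemma avg_bound {Ω : Type*} [MeasurableSpace Ω] {μ : Measure Ω} {M : ℕ} (hM : M ≠ 0)
    {r : ℝ≥0∞} (hr : 1 ≤ r) {f : Fin M → Ω → ℝ}
    (hf : ∀ i, AEStronglyMeasurable (f i) μ) {Z : ℝ≥0∞}
    (hZ : ∀ i, eLpNorm (f i) r μ ≤ Z) :
    eLpNorm (fun ω => (M:ℝ)⁻¹ * ∑ i, f i ω) r μ ≤ Z := by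
  have hcoe : (‖((M:ℝ))⁻¹‖₊ : ℝ≥0∞) = ((M:ℝ≥0∞))⁻¹ := by
    rw [nnnorm_inv, Real.nnnorm_natCast, ENNReal.coe_inv (by exact_mod_cast Nat.cast_ne_zero.mpr hM),
      ENNReal.coe_natCast]
  have h0 : (fun ω => (M:ℝ)⁻¹ * ∑ i, f i ω) = (M:ℝ)⁻¹ • (fun ω => ∑ i, f i ω) := rfl
  have hsum : eLpNorm (fun ω => ∑ i, f i ω) r μ ≤ (M:ℝ≥0∞) * Z := by
    have h1 : (fun ω => ∑ i, f i ω) = ∑ i, f i := by ext ω; simp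
    rw [h1]
    refine (eLpNorm_sum_le (fun i _ => hf i) hr).trans ?_
    calc ∑ i : Fin M, eLpNorm (f i) r μ ≤ ∑ _i : Fin M, Z :=
          Finset.sum_le_sum fun i _ => hZ i
      _ = (M:ℝ≥0∞) * Z := by simp [Finset.sum_const, nsmul_eq_mul]
  calc eLpNorm (fun ω => (M:ℝ)⁻¹ * ∑ i, f i ω) r μ
      = (M:ℝ≥0∞)⁻¹ * eLpNorm (fun ω => ∑ i, f i ω) r μ := by
        rw [h0, eLpNorm_const_smul]
        rw [enorm_eq_nnnorm, hcoe]
    _ ≤ (M:ℝ≥0∞)⁻¹ * ((M:ℝ≥0∞) * Z) := by gcongr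
    _ = Z := by
        rw [← mul_assoc, ENNReal.inv_mul_cancel (by exact_mod_cast hM) (ENNReal.natCast_ne_top M),
          one_mul]

lemma lpNorm_eq_toReal {Ω : Type*} [MeasurableSpace Ω] {μ : Measure Ω}
    {H : Type*} [NormedAddCommGroup H] {q : ℝ} (hq : 0 < q) {u : Ω → H}
    (hu : MemLp u (ENNReal.ofReal q) μ) :
    lpNorm μ q u = (eLpNorm u (ENNReal.ofReal q) μ).toReal := by
  rw [hu.eLpNorm_eq_integral_rpow_norm (by simp [ENNReal.ofReal_eq_zero]; linarith)
    ENNReal.ofReal_ne_top]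
  rw [ENNReal.toReal_ofReal hq.le]
  rw [ENNReal.toReal_ofReal
    (Real.rpow_nonneg (integral_nonneg fun ω => Real.rpow_nonneg (norm_nonneg _) _) _)]
  rw [_root_.lpNorm, one_div]


section PW
variable {H : Type*} [NormedAddCommGroup H] [InnerProductSpace ℝ H]
  (e : HilbertBasis ℕ ℝ H)

lemma key_pointwise {Ω : Type*} (M : ℕ) (hM : 2 ≤ M) (u v : Fin M → Ω → H) (ω : Ω) :
    hsNorm e (sampleCov M u ω - sampleCov M v ω) ≤
      ((M:ℝ)/((M:ℝ)-1)) * ((M:ℝ)⁻¹ * ∑ i, ‖u i ω - v i ω‖ * (‖u i ω‖ + ‖v i ω‖))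
      + ((M:ℝ)/((M:ℝ)-1)) * (((M:ℝ)⁻¹ * ∑ i, ‖u i ω - v i ω‖)
          * ((M:ℝ)⁻¹ * ∑ i, ‖u i ω‖ + (M:ℝ)⁻¹ * ∑ i, ‖v i ω‖)) := by
  have hM1 : (1:ℝ) ≤ (M:ℝ) - 1 := by
    have : (2:ℝ) ≤ (M:ℝ) := by exact_mod_cast hM
    linarith
  set c := (M:ℝ)/((M:ℝ)-1) with hc
  have hc0 : 0 ≤ c := div_nonneg (by positivity) (by linarith)
  set x := fun i => u i ω with hx
  set y := fun i => v i ω with hy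
  set mx := (M:ℝ)⁻¹ • ∑ i, x i with hmx
  set my := (M:ℝ)⁻¹ • ∑ i, y i with hmy
  have hrw : sampleCov M u ω - sampleCov M v ω
      = c • (((M:ℝ)⁻¹ • ∑ i, (outer (x i) - outer (y i)))
          - (outer mx - outer my)) := by
    rw [sampleCov, sampleCov, ← smul_sub]
    congr 1
    rw [Finset.sum_sub_distrib, smul_sub]
    abel
  rw [hrw, hsNorm_smul, abs_of_nonneg hc0, ← mul_add]
  apply mul_le_mul_of_nonneg_left _ hc0
  have hA : IsHS e ((M:ℝ)⁻¹ • ∑ i, (outer (x i) - outer (y i))) :=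
    IsHS.smul e (isHS_sum e Finset.univ _ (fun i _ => isHS_outer_sub e _ _)) _
  have hB : IsHS e (outer mx - outer my) := isHS_outer_sub e _ _
  refine (hsNorm_sub_le e hA hB).trans ?_
  apply add_le_add
  · rw [hsNorm_smul, abs_of_nonneg (by positivity : (0:ℝ) ≤ (M:ℝ)⁻¹)]
    apply mul_le_mul_of_nonneg_left _ (by positivity)
    refine (hsNorm_sum_le e Finset.univ _ fun i _ => isHS_outer_sub e _ _).trans ?_
    exact Finset.sum_le_sum fun i _ => hsNorm_outer_sub_le e _ _
  · refine (hsNorm_outer_sub_le e mx my).trans ?_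
    have h1 : ‖mx - my‖ ≤ (M:ℝ)⁻¹ * ∑ i, ‖x i - y i‖ := by
      rw [hmx, hmy, ← smul_sub, ← Finset.sum_sub_distrib, norm_smul,
        Real.norm_eq_abs, abs_of_nonneg (by positivity : (0:ℝ) ≤ (M:ℝ)⁻¹)]
      exact mul_le_mul_of_nonneg_left (norm_sum_le _ _) (by positivity)
    have h2 : ‖mx‖ ≤ (M:ℝ)⁻¹ * ∑ i, ‖x i‖ := by
      rw [hmx, norm_smul, Real.norm_eq_abs,
        abs_of_nonneg (by positivity : (0:ℝ) ≤ (M:ℝ)⁻¹)]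
      exact mul_le_mul_of_nonneg_left (norm_sum_le _ _) (by positivity)
    have h3 : ‖my‖ ≤ (M:ℝ)⁻¹ * ∑ i, ‖y i‖ := by
      rw [hmy, norm_smul, Real.norm_eq_abs,
        abs_of_nonneg (by positivity : (0:ℝ) ≤ (M:ℝ)⁻¹)]
      exact mul_le_mul_of_nonneg_left (norm_sum_le _ _) (by positivity)
    have hs : (0:ℝ) ≤ ∑ i, ‖x i - y i‖ := Finset.sum_nonneg fun i _ => norm_nonneg _
    apply mul_le_mul h1 (add_le_add h2 h3) (by positivity) (by positivity)
end PW

/-- for `M ≥ 2` and pairs `(X_i, Y_i)` each identically distributed with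
`(X, Y)`, `X, Y ∈ L^{2p}(Ω;𝓗)` (no independence assumed),
`‖cov_M[X_·] − cov_M[Y_·]‖_{L^p(Ω;𝓗⊗𝓗)} ≤ (2M/(M−1)) ‖X−Y‖_{L^{2p}} (‖X‖_{L^{2p}} + ‖Y‖_{L^{2p}})`. -/
theorem stmt11
    {Ω : Type*} [MeasurableSpace Ω] (μ : Measure Ω) [IsProbabilityMeasure μ]
    {H : Type*} [NormedAddCommGroup H] [InnerProductSpace ℝ H] [CompleteSpace H]
    [MeasurableSpace H] [BorelSpace H] [SecondCountableTopology H]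
    (e : HilbertBasis ℕ ℝ H)
    (p : ℝ) (hp : 2 ≤ p) (M : ℕ) (hM : 2 ≤ M)
    (X₀ Y₀ : Ω → H)
    (hX₀ : MemLp X₀ (ENNReal.ofReal (2 * p)) μ)
    (hY₀ : MemLp Y₀ (ENNReal.ofReal (2 * p)) μ)
    (X Y : Fin M → Ω → H)
    (hid : ∀ i, IdentDistrib (fun ω => (X i ω, Y i ω)) (fun ω => (X₀ ω, Y₀ ω)) μ μ) :
    lpNormHS μ e p (fun ω => sampleCov M X ω - sampleCov M Y ω)
      ≤ (2 * M / ((M : ℝ) - 1)) * lpNorm μ (2 * p) (fun ω => X₀ ω - Y₀ ω) *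
          (lpNorm μ (2 * p) X₀ + lpNorm μ (2 * p) Y₀) := by
  classical
  have hMR : (2:ℝ) ≤ (M:ℝ) := by exact_mod_cast hM
  have hMne : M ≠ 0 := by omega
  have hp0 : 0 < p := by linarith
  set P := ENNReal.ofReal p with hPdef
  set Q := ENNReal.ofReal (2 * p) with hQdef
  have hPne0 : P ≠ 0 := by
    rw [hPdef, Ne, ENNReal.ofReal_eq_zero]; linarith
  have hPtop : P ≠ ∞ := ENNReal.ofReal_ne_top
  have hP1 : 1 ≤ P := ENNReal.one_le_ofReal.mpr (by linarith)
  have hQ1 : 1 ≤ Q := ENNReal.one_le_ofReal.mpr (by linarith)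
  have hQP : Q = 2 * P := by
    rw [hQdef, hPdef, ENNReal.ofReal_mul (by norm_num : (0:ℝ) ≤ 2)]
    norm_num
  have hpqr : 1 / P = 1 / Q + 1 / Q := by
    rw [hQP, ENNReal.div_add_div_same, one_add_one_eq_two]
    exact (((by rw [mul_one] : (2:ℝ≥0∞) / (2 * P) = 2 * 1 / (2 * P))).trans
      (ENNReal.mul_div_mul_left 1 P two_ne_zero ENNReal.ofNat_ne_top)).symm
  have hH : ENNReal.HolderTriple Q Q P := ⟨by simpa only [one_div] using hpqr.symm⟩
  set c := (M:ℝ) / ((M:ℝ) - 1) with hcdef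
  have hc0 : 0 ≤ c := div_nonneg (by positivity) (by linarith)
  -- identically distributed components
  have hidX : ∀ i, IdentDistrib (X i) X₀ μ μ := fun i => (hid i).comp measurable_fst
  have hidY : ∀ i, IdentDistrib (Y i) Y₀ μ μ := fun i => (hid i).comp measurable_snd
  have hidD : ∀ i, IdentDistrib (fun ω => X i ω - Y i ω) (fun ω => X₀ ω - Y₀ ω) μ μ :=
    fun i => (hid i).comp (measurable_fst.sub measurable_snd)
  have hD0 : MemLp (fun ω => X₀ ω - Y₀ ω) Q μ := hX₀.sub hY₀
  have hXQ : ∀ i, MemLp (X i) Q μ := fun i => (hidX i).symm.memLp_snd hX₀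
  have hYQ : ∀ i, MemLp (Y i) Q μ := fun i => (hidY i).symm.memLp_snd hY₀
  have hDQ : ∀ i, MemLp (fun ω => X i ω - Y i ω) Q μ :=
    fun i => (hidD i).symm.memLp_snd hD0
  have hF : ∀ i, MemLp (fun ω => ‖X i ω - Y i ω‖) Q μ := fun i => (hDQ i).norm
  have hGX : ∀ i, MemLp (fun ω => ‖X i ω‖) Q μ := fun i => (hXQ i).norm
  have hGY : ∀ i, MemLp (fun ω => ‖Y i ω‖) Q μ := fun i => (hYQ i).norm
  set D' := eLpNorm (fun ω => X₀ ω - Y₀ ω) Q μ with hD'def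
  set NX := eLpNorm X₀ Q μ with hNXdef
  set NY := eLpNorm Y₀ Q μ with hNYdef
  have hFeq : ∀ i, eLpNorm (fun ω => ‖X i ω - Y i ω‖) Q μ = D' := fun i => by
    rw [eLpNorm_norm, hD'def]; exact (hidD i).eLpNorm_eq Q
  have hGXeq : ∀ i, eLpNorm (fun ω => ‖X i ω‖) Q μ = NX := fun i => by
    rw [eLpNorm_norm, hNXdef]; exact (hidX i).eLpNorm_eq Q
  have hGYeq : ∀ i, eLpNorm (fun ω => ‖Y i ω‖) Q μ = NY := fun i => by
    rw [eLpNorm_norm, hNYdef]; exact (hidY i).eLpNorm_eq Q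
  have hGsum_le : ∀ i, eLpNorm (fun ω => ‖X i ω‖ + ‖Y i ω‖) Q μ ≤ NX + NY := fun i => by
    refine (eLpNorm_add_le (hGX i).1 (hGY i).1 hQ1).trans ?_
    rw [hGXeq i, hGYeq i]
  -- products
  have hMemProd : ∀ i, MemLp (fun ω => ‖X i ω - Y i ω‖ * (‖X i ω‖ + ‖Y i ω‖)) P μ :=
    fun i => MemLp.smul ((hGX i).add (hGY i)) (hF i) (hpqr := hH)
  have hprod : ∀ i, eLpNorm (fun ω => ‖X i ω - Y i ω‖ * (‖X i ω‖ + ‖Y i ω‖)) P μ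
      ≤ D' * (NX + NY) := fun i => by
    have H := eLpNorm_smul_le_mul_eLpNorm ((hGX i).1.add (hGY i).1) (hF i).1 (hpqr := hH)
    refine le_trans H ?_
    rw [hFeq i]
    exact mul_le_mul_right (hGsum_le i) _
  -- the dominating function
  set S1 : Ω → ℝ := fun ω => (M:ℝ)⁻¹ * ∑ i, ‖X i ω - Y i ω‖ * (‖X i ω‖ + ‖Y i ω‖) with hS1def
  set Fbar : Ω → ℝ := fun ω => (M:ℝ)⁻¹ * ∑ i, ‖X i ω - Y i ω‖ with hFbardef
  set Gbar : Ω → ℝ := fun ω => (M:ℝ)⁻¹ * ∑ i, (‖X i ω‖ + ‖Y i ω‖) with hGbardef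
  set g : Ω → ℝ := fun ω => c * S1 ω + c * (Fbar ω * Gbar ω) with hgdef
  have hS1le : eLpNorm S1 P μ ≤ D' * (NX + NY) :=
    avg_bound hMne hP1 (fun i => (hMemProd i).1) hprod
  have hFbarle : eLpNorm Fbar Q μ ≤ D' :=
    avg_bound hMne hQ1 (fun i => (hF i).1) (fun i => (hFeq i).le)
  have hGbarle : eLpNorm Gbar Q μ ≤ NX + NY :=
    avg_bound hMne hQ1 (fun i => (hGX i).1.add (hGY i).1) hGsum_le
  have hS1mem : MemLp S1 P μ :=
    (memLp_finset_sum Finset.univ (fun i _ => hMemProd i)).const_mul _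
  have hFbarmem : MemLp Fbar Q μ :=
    (memLp_finset_sum Finset.univ (fun i _ => hF i)).const_mul _
  have hGbarmem : MemLp Gbar Q μ :=
    (memLp_finset_sum Finset.univ (fun i _ => (hGX i).add (hGY i))).const_mul _
  have hFGmem : MemLp (fun ω => Fbar ω * Gbar ω) P μ := MemLp.smul hGbarmem hFbarmem (hpqr := hH)
  have hFGle : eLpNorm (fun ω => Fbar ω * Gbar ω) P μ ≤ D' * (NX + NY) :=
    (eLpNorm_smul_le_mul_eLpNorm hGbarmem.1 hFbarmem.1 (hpqr := hH)).trans
      (mul_le_mul' hFbarle hGbarle)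
  have hgmem : MemLp g P μ := (hS1mem.const_mul c).add (hFGmem.const_mul c)
  have hgnonneg : ∀ ω, 0 ≤ g ω := by
    intro ω
    have h1 : 0 ≤ S1 ω := by
      rw [hS1def]
      refine mul_nonneg (by positivity) (Finset.sum_nonneg fun i _ => by positivity)
    have h2 : 0 ≤ Fbar ω := by
      rw [hFbardef]
      refine mul_nonneg (by positivity) (Finset.sum_nonneg fun i _ => by positivity)
    have h3 : 0 ≤ Gbar ω := by
      rw [hGbardef]
      refine mul_nonneg (by positivity) (Finset.sum_nonneg fun i _ => by positivity)
    rw [hgdef]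
    exact add_nonneg (mul_nonneg hc0 h1) (mul_nonneg hc0 (mul_nonneg h2 h3))
  have hcsmul : ∀ (f : Ω → ℝ),
      eLpNorm (fun ω => c * f ω) P μ = ENNReal.ofReal c * eLpNorm f P μ := by
    intro f
    rw [show (fun ω => c * f ω) = c • f from rfl, eLpNorm_const_smul,
      Real.enorm_eq_ofReal hc0]
  have hgbound : eLpNorm g P μ ≤ ENNReal.ofReal c * (D' * (NX + NY))
      + ENNReal.ofReal c * (D' * (NX + NY)) := by
    rw [hgdef]
    refine (eLpNorm_add_le ((hS1mem.const_mul c).1) ((hFGmem.const_mul c).1) hP1).trans ?_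
    rw [hcsmul, hcsmul]
    exact add_le_add (mul_le_mul_right hS1le _) (mul_le_mul_right hFGle _)
  -- pointwise domination
  have key : ∀ ω, hsNorm e (sampleCov M X ω - sampleCov M Y ω) ≤ g ω := by
    intro ω
    refine (key_pointwise e M hM X Y ω).trans_eq ?_
    rw [hgdef, hS1def, hFbardef, hGbardef, hcdef]
    simp only
    rw [Finset.sum_add_distrib]
    ring
  -- integrability of g ^ p
  have hgint : Integrable (fun ω => g ω ^ p) μ := by
    have H := hgmem.integrable_norm_rpow hPne0 hPtop
    have heq : (fun ω => ‖g ω‖ ^ P.toReal) = fun ω => g ω ^ p := funext fun ω => by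
      rw [Real.norm_eq_abs, abs_of_nonneg (hgnonneg ω), hPdef,
        ENNReal.toReal_ofReal hp0.le]
    rwa [heq] at H
  -- step 1: compare the integrals
  have step1 : lpNormHS μ e p (fun ω => sampleCov M X ω - sampleCov M Y ω)
      ≤ (∫ ω, g ω ^ p ∂μ) ^ (1 / p) := by
    rw [lpNormHS]
    refine Real.rpow_le_rpow
      (integral_nonneg fun ω => Real.rpow_nonneg (hsNorm_nonneg e _) p) ?_ (by positivity)
    refine integral_mono_of_nonneg
      (Filter.Eventually.of_forall fun ω => Real.rpow_nonneg (hsNorm_nonneg e _) p) hgint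
      (Filter.Eventually.of_forall fun ω => ?_)
    exact Real.rpow_le_rpow (hsNorm_nonneg e _) (key ω) hp0.le
  -- step 2: identify with the eLpNorm
  have step2 : (∫ ω, g ω ^ p ∂μ) ^ (1 / p) = (eLpNorm g P μ).toReal := by
    rw [hgmem.eLpNorm_eq_integral_rpow_norm hPne0 hPtop]
    rw [ENNReal.toReal_ofReal
      (Real.rpow_nonneg (integral_nonneg fun ω => Real.rpow_nonneg (norm_nonneg _) _) _)]
    have hPt : P.toReal = p := by rw [hPdef, ENNReal.toReal_ofReal hp0.le]
    rw [hPt, one_div]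
    congr 1
    refine integral_congr_ae (Filter.Eventually.of_forall fun ω => ?_)
    show g ω ^ p = ‖g ω‖ ^ p
    rw [Real.norm_eq_abs, abs_of_nonneg (hgnonneg ω)]
  -- step 3: the ennreal bound
  have step3 : eLpNorm g P μ ≤ ENNReal.ofReal (2 * c) * (D' * (NX + NY)) := by
    refine hgbound.trans_eq ?_
    rw [← two_mul, ← mul_assoc, ENNReal.ofReal_mul (by norm_num : (0:ℝ) ≤ 2)]
    norm_num
  have hfinD : D' ≠ ∞ := hD0.2.ne
  have hfinX : NX ≠ ∞ := hX₀.2.ne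
  have hfinY : NY ≠ ∞ := hY₀.2.ne
  have hRfin : ENNReal.ofReal (2 * c) * (D' * (NX + NY)) ≠ ∞ :=
    ENNReal.mul_ne_top ENNReal.ofReal_ne_top
      (ENNReal.mul_ne_top hfinD (ENNReal.add_ne_top.mpr ⟨hfinX, hfinY⟩))
  calc lpNormHS μ e p (fun ω => sampleCov M X ω - sampleCov M Y ω)
      ≤ (∫ ω, g ω ^ p ∂μ) ^ (1 / p) := step1
    _ = (eLpNorm g P μ).toReal := step2
    _ ≤ (ENNReal.ofReal (2 * c) * (D' * (NX + NY))).toReal :=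
        ENNReal.toReal_mono hRfin step3
    _ = (2 * M / ((M:ℝ) - 1)) * lpNorm μ (2 * p) (fun ω => X₀ ω - Y₀ ω) *
          (lpNorm μ (2 * p) X₀ + lpNorm μ (2 * p) Y₀) := by
        rw [ENNReal.toReal_mul, ENNReal.toReal_mul, ENNReal.toReal_add hfinX hfinY,
          ENNReal.toReal_ofReal (by positivity)]
        rw [lpNorm_eq_toReal (by linarith : (0:ℝ) < 2 * p) hD0,
          lpNorm_eq_toReal (by linarith : (0:ℝ) < 2 * p) hX₀,
          lpNorm_eq_toReal (by linarith : (0:ℝ) < 2 * p) hY₀]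
        rw [hD'def, hNXdef, hNYdef, hcdef]
        ring
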